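/- Let p be a prime, d an even positive integer, and let M be a d×d matrix over the ring ℤ_p of p-adic integers which is alternating (Mᵀ = −M and all diagonal entries are 0), satisfies det M ≠ 0, and whose reduction modulo p has rank d−2 as a matrix over F_p. Then the p-adic valuation of det M is an even number 2e, and there exist matrices U, V ∈ GL_d(ℤ_p) such that U·M·V is the diagonal matrix whose first d−2 diagonal entries equal 1 and whose last two diagonal entries both equal p^e. -/

import Mathlib

open Matrix

section Aux

open Matrix Submodule Set Module
-- existence of a principal nonsingular r×r submatrix of a skew matrix of rank r
lemma skew_exists_principal {K : Type*} [Field K] {n r : ℕ}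
    (B : Matrix (Fin n) (Fin n) K) (hskew : Bᵀ = -B) (hrank : B.rank = r) :
    ∃ f : Fin r → Fin n, Function.Injective f ∧ IsUnit (B.submatrix f f).det := by
  classical
  set R : Fin n → (Fin n → K) := fun i => B i with hR
  -- row space
  have hrankT : Bᵀ.rank = r := by rw [Matrix.rank_transpose]; exact hrank
  have hW : finrank K (span K (Set.range R)) = r := by
    have h2 := Bᵀ.rank_eq_finrank_span_cols
    rw [hrankT] at h2
    exact h2.symm
  obtain ⟨b, hbsub, hbspan, hbind⟩ := exists_linearIndependent K (Set.range R)
  have hbfin : b.Finite := Set.Finite.subset (Set.finite_range R) hbsub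
  haveI : Fintype b := hbfin.fintype
  have hcard : b.toFinset.card = r := by
    have := finrank_span_set_eq_card (s := b) hbind
    rw [hbspan, hW] at this; exact this.symm
  have hcard' : Fintype.card b = r := by rwa [Set.toFinset_card] at hcard
  -- choose indices
  have hchoice : ∀ v : b, ∃ i : Fin n, R i = (v : Fin n → K) := fun v => hbsub v.2
  choose g hg using hchoice
  obtain e := (Fintype.equivFinOfCardEq hcard').symm
  set f : Fin r → Fin n := fun i => g (e i) with hf
  have hfinj : Function.Injective f := by
    intro i j hij
    apply e.injective
    apply Subtype.ext
    have h1 := hg (e i); have h2 := hg (e j)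
    simp only [hf] at hij
    rw [← h1, ← h2, hij]
  have hRf : ∀ i, R (f i) = ((e i : b) : Fin n → K) := fun i => hg (e i)
  have hindf : LinearIndependent K (fun i => R (f i)) := by
    have : (fun i => R (f i)) = (Subtype.val : b → (Fin n → K)) ∘ e := by
      funext i; exact hRf i
    rw [this]
    exact hbind.comp e e.injective
  have hspanf : span K (Set.range (fun i => R (f i))) = span K (Set.range R) := by
    have : Set.range (fun i => R (f i)) = b := by
      have h1 : (fun i => R (f i)) = (Subtype.val : b → (Fin n → K)) ∘ e := by
        funext i; exact hRf i
      rw [h1, Set.range_comp, Equiv.range_eq_univ, Set.image_univ, Subtype.range_coe]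
    rw [this, hbspan]
  refine ⟨f, hfinj, ?_⟩
  rw [isUnit_iff_ne_zero]
  intro hdet
  obtain ⟨x, hx0, hxv⟩ := (Matrix.exists_vecMul_eq_zero_iff).2 hdet
  -- the linear functional w ↦ ∑ i, x i * w (f i)
  set L : (Fin n → K) →ₗ[K] K := ∑ i : Fin r, x i • LinearMap.proj (f i) with hLdef
  have hL : ∀ w : Fin n → K, L w = ∑ i : Fin r, x i * w (f i) := by
    intro w
    simp [hLdef, LinearMap.sum_apply, LinearMap.smul_apply, LinearMap.proj_apply, smul_eq_mul]
  have hgen : ∀ i' : Fin r, L (R (f i')) = 0 := by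
    intro i'
    have h1 := congrFun hxv i'
    simp only [Matrix.vecMul, dotProduct, Matrix.submatrix_apply, Pi.zero_apply] at h1
    rw [hL]
    have h2 : ∀ i : Fin r, R (f i') (f i) = -(B (f i) (f i')) := by
      intro i
      have := congrFun (congrFun hskew (f i)) (f i')
      simp only [Matrix.transpose_apply, Matrix.neg_apply] at this
      simp [hR, this]
    calc ∑ i : Fin r, x i * R (f i') (f i) = ∑ i : Fin r, -(x i * B (f i) (f i')) := by
          apply Finset.sum_congr rfl; intro i _; rw [h2 i]; ring
      _ = -∑ i : Fin r, x i * B (f i) (f i') := by rw [Finset.sum_neg_distrib]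
      _ = 0 := by rw [h1, neg_zero]
  have hker : span K (Set.range (fun i => R (f i))) ≤ LinearMap.ker L := by
    rw [span_le]
    rintro - ⟨i, rfl⟩
    exact hgen i
  have hallrows : ∀ j, L (R j) = 0 := by
    intro j
    have : R j ∈ span K (Set.range (fun i => R (f i))) := by
      rw [hspanf]; exact subset_span (Set.mem_range_self j)
    exact hker this
  have hzero : ∑ i : Fin r, x i • R (f i) = 0 := by
    funext j
    have hcol : (fun m => B m j) = -(R j) := by
      funext m
      have := congrFun (congrFun hskew j) m
      simp only [Matrix.transpose_apply, Matrix.neg_apply] at this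
      simp [hR, this]
    have : L (fun m => B m j) = 0 := by
      rw [hcol, map_neg, hallrows, neg_zero]
    rw [hL] at this
    simpa [Finset.sum_apply, hR] using this
  have := Fintype.linearIndependent_iff.1 hindf x hzero
  exact hx0 (funext this)

lemma exists_equiv_extend {r s n : ℕ} (h : r + s = n) (f : Fin r → Fin n)
    (hf : Function.Injective f) :
    ∃ ρ : (Fin r ⊕ Fin s) ≃ Fin n, ∀ i, ρ (Sum.inl i) = f i := by
  classical
  have hcardc : Fintype.card ((Set.range f)ᶜ : Set (Fin n)) = s := by
    rw [Fintype.card_compl_set, Set.card_range_of_injective hf]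
    simp only [Fintype.card_fin]
    omega
  obtain g := (Fintype.equivFinOfCardEq hcardc).symm
  set F : Fin r ⊕ Fin s → Fin n := Sum.elim f (fun j => ((g j : ((Set.range f)ᶜ : Set (Fin n))) : Fin n)) with hF
  have hinj : Function.Injective F := by
    rintro (a|a) (b|b) hab <;> simp only [hF, Sum.elim_inl, Sum.elim_inr] at hab
    · exact congrArg Sum.inl (hf hab)
    · exact absurd ⟨a, hab⟩ (g b).2
    · exact absurd ⟨b, hab.symm⟩ (g a).2
    · exact congrArg Sum.inr (g.injective (Subtype.ext hab))
  have hbij : Function.Bijective F := by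
    rw [Fintype.bijective_iff_injective_and_card]
    exact ⟨hinj, by simp [h]⟩
  exact ⟨Equiv.ofBijective F hbij, fun i => rfl⟩

lemma padic_isUnit {p : ℕ} [Fact p.Prime] {x : ℤ_[p]} (h : PadicInt.toZMod x ≠ 0) :
    IsUnit x := by
  by_contra hx
  apply h
  have hmem : x ∈ IsLocalRing.maximalIdeal ℤ_[p] := (IsLocalRing.mem_maximalIdeal x).2 hx
  rw [show IsLocalRing.maximalIdeal ℤ_[p] = RingHom.ker (PadicInt.toZMod (p := p)) from PadicInt.ker_toZMod.symm] at hmem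
  exact RingHom.mem_ker.1 hmem

lemma padic_val_mul {p : ℕ} [Fact p.Prime] {x y : ℤ_[p]} (hx : x ≠ 0) (hy : y ≠ 0) :
    (x * y).valuation = x.valuation + y.valuation := by
  have hx' : (x : ℚ_[p]) ≠ 0 := PadicInt.coe_ne_zero.2 hx
  have hy' : (y : ℚ_[p]) ≠ 0 := PadicInt.coe_ne_zero.2 hy
  exact PadicInt.valuation_mul hx hy

lemma padic_val_unit {p : ℕ} [Fact p.Prime] (u : ℤ_[p]ˣ) : (u : ℤ_[p]).valuation = 0 := by
  have h0 : (u : ℤ_[p]) ≠ 0 := u.ne_zero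
  have h1 : ((u⁻¹ : ℤ_[p]ˣ) : ℤ_[p]) ≠ 0 := u⁻¹.ne_zero
  have h2 : ((u : ℤ_[p]) * ((u⁻¹ : ℤ_[p]ˣ) : ℤ_[p])).valuation = 0 := by
    rw [← Units.val_mul, mul_inv_cancel, Units.val_one, PadicInt.valuation_one]
  rw [padic_val_mul h0 h1] at h2
  omega

end Aux


/-- An alternating `d × d` matrix over `ℤ_p` (with `d` even) of nonzero determinant
whose reduction mod `p` has rank `d - 2` has determinant of even valuation `2e`, and
Smith normal form `diag(1, …, 1, p^e, p^e)`. -/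
theorem stmt4 (p : ℕ) [Fact p.Prime] (d : ℕ) (hd : 0 < d) (hdeven : Even d)
    (M : Matrix (Fin d) (Fin d) ℤ_[p])
    (halt : Mᵀ = -M) (hdiag : ∀ i, M i i = 0)
    (hdet : M.det ≠ 0)
    (hrank : (M.map (fun a => PadicInt.toZMod a)).rank = d - 2) :
    ∃ e : ℕ, M.det.valuation = 2 * (e : ℤ) ∧
      ∃ U V : Matrix (Fin d) (Fin d) ℤ_[p],
        IsUnit U.det ∧ IsUnit V.det ∧
        U * M * V = Matrix.diagonal (fun i : Fin d =>
          if (i : ℕ) < d - 2 then 1 else (p : ℤ_[p]) ^ e) := by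
  classical
  have hd2 : 2 ≤ d := by
    rcases hdeven with ⟨k, hk⟩; omega
  have hMs : ∀ a b, M a b = -M b a := by
    intro a b
    have := congrFun (congrFun halt b) a
    simpa [Matrix.transpose_apply, Matrix.neg_apply] using this
  -- reduction mod p
  set B : Matrix (Fin d) (Fin d) (ZMod p) := M.map (fun a => PadicInt.toZMod a) with hB
  have hBskew : Bᵀ = -B := by
    ext i j
    simp only [hB, Matrix.transpose_apply, Matrix.map_apply, Matrix.neg_apply]
    rw [hMs j i, map_neg]
  obtain ⟨f, hfinj, hfdet⟩ := skew_exists_principal B hBskew hrank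
  obtain ⟨ρ, hρ⟩ := exists_equiv_extend (show d - 2 + 2 = d by omega) f hfinj
  set N : Matrix (Fin (d-2) ⊕ Fin 2) (Fin (d-2) ⊕ Fin 2) ℤ_[p] := M.submatrix ρ ρ with hN
  have hNs : ∀ a b, N a b = -N b a := fun a b => hMs (ρ a) (ρ b)
  have hdetN : N.det = M.det := Matrix.det_submatrix_equiv_self ρ M
  -- blocks
  set A : Matrix (Fin (d-2)) (Fin (d-2)) ℤ_[p] := N.toBlocks₁₁ with hA
  set Bb : Matrix (Fin (d-2)) (Fin 2) ℤ_[p] := N.toBlocks₁₂ with hBb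
  set C : Matrix (Fin 2) (Fin (d-2)) ℤ_[p] := N.toBlocks₂₁ with hC
  set Dm : Matrix (Fin 2) (Fin 2) ℤ_[p] := N.toBlocks₂₂ with hDm
  have hblocks : Matrix.fromBlocks A Bb C Dm = N := Matrix.fromBlocks_toBlocks N
  have hAunit : IsUnit A.det := by
    apply padic_isUnit
    have h1 : A = M.submatrix (fun i => f i) (fun j => f j) := by
      ext i j
      simp [hA, Matrix.toBlocks₁₁, hN, hρ]
    have h2 : (PadicInt.toZMod (p := p)) A.det = (B.submatrix f f).det := by
      rw [RingHom.map_det, h1]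
      congr 1
    rw [h2]
    exact hfdet.ne_zero
  -- Schur complement reduction
  have hA1 : A⁻¹ * A = 1 := Matrix.nonsing_inv_mul A hAunit
  have hA2 : A * A⁻¹ = 1 := Matrix.mul_nonsing_inv A hAunit
  set S : Matrix (Fin 2) (Fin 2) ℤ_[p] := Dm - C * A⁻¹ * Bb with hS
  set U1 : Matrix (Fin (d-2) ⊕ Fin 2) (Fin (d-2) ⊕ Fin 2) ℤ_[p] := Matrix.fromBlocks A⁻¹ 0 (-(C * A⁻¹)) 1 with hU1
  set V1 : Matrix (Fin (d-2) ⊕ Fin 2) (Fin (d-2) ⊕ Fin 2) ℤ_[p] := Matrix.fromBlocks 1 (-(A⁻¹ * Bb)) 0 1 with hV1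
  have hstep1 : U1 * N = Matrix.fromBlocks 1 (A⁻¹ * Bb) 0 S := by
    rw [← hblocks, hU1, Matrix.fromBlocks_multiply]
    rw [Matrix.fromBlocks_inj]
    refine ⟨?_, ?_, ?_, ?_⟩
    · rw [Matrix.zero_mul, add_zero, hA1]
    · rw [Matrix.zero_mul, add_zero]
    · rw [Matrix.one_mul, Matrix.neg_mul, Matrix.mul_assoc, hA1, Matrix.mul_one,
        neg_add_cancel]
    · rw [hS, Matrix.one_mul, Matrix.neg_mul, neg_add_eq_sub]
  have hstep2 : U1 * N * V1 = Matrix.fromBlocks 1 0 0 S := by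
    rw [hstep1, hV1, Matrix.fromBlocks_multiply]
    rw [Matrix.fromBlocks_inj]
    refine ⟨?_, ?_, ?_, ?_⟩
    · rw [Matrix.mul_zero, add_zero, Matrix.one_mul]
    · rw [Matrix.one_mul, Matrix.mul_one, neg_add_cancel]
    · rw [Matrix.zero_mul, Matrix.mul_zero, add_zero]
    · rw [Matrix.zero_mul, Matrix.mul_one, zero_add]
  have hdetAinv : IsUnit A⁻¹.det := by
    apply IsUnit.of_mul_eq_one A.det
    rw [← Matrix.det_mul, hA1, Matrix.det_one]
  have hdetU1 : IsUnit U1.det := by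
    rw [hU1, Matrix.det_fromBlocks_zero₁₂, Matrix.det_one, mul_one]
    exact hdetAinv
  have hdetV1 : V1.det = 1 := by
    rw [hV1, Matrix.det_fromBlocks_zero₂₁, Matrix.det_one, Matrix.det_one, mul_one]
  -- S is skew
  have hAT : Aᵀ = -A := by
    ext i j
    simp only [Matrix.transpose_apply, Matrix.neg_apply, hA, Matrix.toBlocks₁₁,
      Matrix.of_apply]
    exact hNs (Sum.inl j) (Sum.inl i)
  have hBbT : Bbᵀ = -C := by
    ext i j
    simp only [Matrix.transpose_apply, Matrix.neg_apply, hBb, hC, Matrix.toBlocks₁₂,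
      Matrix.toBlocks₂₁, Matrix.of_apply]
    exact hNs (Sum.inl j) (Sum.inr i)
  have hCT : Cᵀ = -Bb := by
    ext i j
    simp only [Matrix.transpose_apply, Matrix.neg_apply, hBb, hC, Matrix.toBlocks₁₂,
      Matrix.toBlocks₂₁, Matrix.of_apply]
    exact hNs (Sum.inr j) (Sum.inl i)
  have hDmT : Dmᵀ = -Dm := by
    ext i j
    simp only [Matrix.transpose_apply, Matrix.neg_apply, hDm, Matrix.toBlocks₂₂,
      Matrix.of_apply]
    exact hNs (Sum.inr j) (Sum.inr i)
  have hATinv : (A⁻¹)ᵀ = -(A⁻¹) := by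
    rw [Matrix.transpose_nonsing_inv, hAT]
    apply Matrix.inv_eq_right_inv
    rw [Matrix.neg_mul, Matrix.mul_neg, neg_neg, hA2]
  have hSsk : Sᵀ = -S := by
    rw [hS, Matrix.transpose_sub, Matrix.transpose_mul, Matrix.transpose_mul,
      hDmT, hBbT, hATinv, hCT]
    simp only [Matrix.neg_mul, Matrix.mul_neg, neg_neg, Matrix.mul_assoc]
    abel
  have hS00 : S 0 0 = 0 := by
    have h := congrFun (congrFun hSsk 0) 0
    simp only [Matrix.transpose_apply, Matrix.neg_apply] at h
    have h2 : (2 : ℤ_[p]) * S 0 0 = 0 := by linear_combination h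
    rcases mul_eq_zero.mp h2 with h3 | h3
    · exact absurd h3 two_ne_zero
    · exact h3
  have hS11 : S 1 1 = 0 := by
    have h := congrFun (congrFun hSsk 1) 1
    simp only [Matrix.transpose_apply, Matrix.neg_apply] at h
    have h2 : (2 : ℤ_[p]) * S 1 1 = 0 := by linear_combination h
    rcases mul_eq_zero.mp h2 with h3 | h3
    · exact absurd h3 two_ne_zero
    · exact h3
  set b : ℤ_[p] := S 0 1 with hbdef
  have hS10 : S 1 0 = -b := by
    have h := congrFun (congrFun hSsk 0) 1
    simpa only [Matrix.transpose_apply, Matrix.neg_apply] using h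
  have hdetS : S.det = b * b := by
    rw [Matrix.det_fin_two, hS00, hS11, hS10]
    ring
  have hdetchain : U1.det * M.det = b * b := by
    have h := congrArg Matrix.det hstep2
    rw [Matrix.det_mul, Matrix.det_mul, hdetN, hdetV1, mul_one,
      Matrix.det_fromBlocks_zero₂₁, Matrix.det_one, one_mul, hdetS] at h
    exact h
  have hb0 : b ≠ 0 := by
    intro h
    rw [h, mul_zero] at hdetchain
    rcases mul_eq_zero.mp hdetchain with h3 | h3
    · exact hdetU1.ne_zero h3
    · exact hdet h3
  -- valuation
  obtain ⟨uU, huU⟩ := hdetU1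
  set e : ℕ := b.valuation with hedef
  set u : ℤ_[p]ˣ := PadicInt.unitCoeff hb0 with hudef
  have hspec : b = (u : ℤ_[p]) * (p : ℤ_[p]) ^ e := PadicInt.unitCoeff_spec hb0
  have hvb : b.valuation = (e : ℤ) := by
    rw [hspec, mul_comm, PadicInt.valuation_p_pow_mul e _ u.ne_zero, padic_val_unit u,
      add_zero]
  have hMdet : M.det = ((uU⁻¹ : ℤ_[p]ˣ) : ℤ_[p]) * (b * b) := by
    rw [← hdetchain, ← huU, ← mul_assoc, ← Units.val_mul, inv_mul_cancel uU, Units.val_one, one_mul]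
  have hval : M.det.valuation = 2 * (e : ℤ) := by
    rw [hMdet, padic_val_mul uU⁻¹.ne_zero (mul_ne_zero hb0 hb0),
      padic_val_unit uU⁻¹, padic_val_mul hb0 hb0, hvb]
    push_cast [hvb]; ring
  -- fix up the 2x2 block
  set w : ℤ_[p] := ((u⁻¹ : ℤ_[p]ˣ) : ℤ_[p]) with hwdef
  have hbw : b * w = (p : ℤ_[p]) ^ e := by
    rw [hspec, hwdef, mul_comm ((u : ℤ_[p])) _, mul_assoc, ← Units.val_mul,
      mul_inv_cancel u, Units.val_one, mul_one]
  set W : Matrix (Fin 2) (Fin 2) ℤ_[p] := !![0, -w; w, 0] with hWdef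
  have hSmat : S = !![0, b; -b, 0] := by
    have h := Matrix.eta_fin_two S
    rw [hS00, hS11, hS10] at h
    rw [← hbdef] at h
    exact h
  have hSW : S * W = Matrix.diagonal (fun _ => (p : ℤ_[p]) ^ e) := by
    have hdiagmat : (Matrix.diagonal (fun _ : Fin 2 => (p : ℤ_[p]) ^ e))
        = !![(p : ℤ_[p])^e, 0; 0, (p : ℤ_[p])^e] := by
      have h := Matrix.eta_fin_two (Matrix.diagonal (fun _ : Fin 2 => (p : ℤ_[p]) ^ e))
      rw [Matrix.diagonal_apply_eq, Matrix.diagonal_apply_eq,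
        Matrix.diagonal_apply_ne _ (by decide : (0 : Fin 2) ≠ 1),
        Matrix.diagonal_apply_ne _ (by decide : (1 : Fin 2) ≠ 0)] at h
      exact h
    rw [hSmat, hWdef, hdiagmat, Matrix.mul_fin_two,
      show (0:ℤ_[p]) * 0 + b * w = (p:ℤ_[p])^e by linear_combination hbw,
      show (0:ℤ_[p]) * -w + b * 0 = 0 by ring,
      show -b * 0 + (0:ℤ_[p]) * w = 0 by ring,
      show -b * -w + (0:ℤ_[p]) * 0 = (p:ℤ_[p])^e by linear_combination hbw]
  have hdetW : IsUnit W.det := by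
    have : W.det = w * w := by
      rw [hWdef, Matrix.det_fin_two_of]
      ring
    rw [this]
    exact (u⁻¹.isUnit).mul (u⁻¹.isUnit)
  set V2 : Matrix (Fin (d-2) ⊕ Fin 2) (Fin (d-2) ⊕ Fin 2) ℤ_[p] :=
    V1 * Matrix.fromBlocks 1 0 0 W with hV2
  have hdetV2 : IsUnit V2.det := by
    rw [hV2, Matrix.det_mul, hdetV1, one_mul, Matrix.det_fromBlocks_zero₂₁,
      Matrix.det_one, one_mul]
    exact hdetW
  set g' : (Fin (d-2) ⊕ Fin 2) → ℤ_[p] :=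
    Sum.elim (fun _ : Fin (d-2) => (1 : ℤ_[p])) (fun _ : Fin 2 => (p : ℤ_[p]) ^ e) with hg'
  have hfinal : U1 * N * V2 = Matrix.diagonal g' := by
    rw [hV2, ← Matrix.mul_assoc, hstep2, Matrix.fromBlocks_multiply,
      ← Matrix.fromBlocks_diagonal, Matrix.fromBlocks_inj]
    refine ⟨by simp [Matrix.diagonal_one], by simp, by simp, by simp [hSW]⟩
  -- transport back to Fin d
  set τ : (Fin (d-2) ⊕ Fin 2) ≃ Fin d :=
    finSumFinEquiv.trans (finCongr (show d - 2 + 2 = d by omega)) with hτ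
  set π : Fin d ≃ Fin d := τ.symm.trans ρ with hπ
  have hMππ : N.submatrix ⇑τ.symm ⇑τ.symm = M.submatrix ⇑π ⇑π := by
    rw [hN, Matrix.submatrix_submatrix]
    rfl
  set Pl : Matrix (Fin d) (Fin d) ℤ_[p] :=
    (1 : Matrix (Fin d) (Fin d) ℤ_[p]).submatrix ⇑π id with hPldef
  set Pr : Matrix (Fin d) (Fin d) ℤ_[p] :=
    (1 : Matrix (Fin d) (Fin d) ℤ_[p]).submatrix id ⇑π with hPrdef
  have hPlM : Pl * M = M.submatrix ⇑π id := by
    have h := Matrix.submatrix_mul_equiv (1 : Matrix (Fin d) (Fin d) ℤ_[p]) M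
      ⇑π (Equiv.refl (Fin d)) id
    rw [Equiv.coe_refl, Matrix.submatrix_id_id, Matrix.one_mul] at h
    exact h
  have hMPr : M.submatrix ⇑π id * Pr = M.submatrix ⇑π ⇑π := by
    have h := Matrix.submatrix_mul_equiv M (1 : Matrix (Fin d) (Fin d) ℤ_[p])
      ⇑π (Equiv.refl (Fin d)) ⇑π
    rw [Equiv.coe_refl, Matrix.mul_one] at h
    exact h
  have hPlPr : Pl * Pr = 1 := by
    have h := Matrix.submatrix_mul_equiv (1 : Matrix (Fin d) (Fin d) ℤ_[p])
      (1 : Matrix (Fin d) (Fin d) ℤ_[p]) ⇑π (Equiv.refl (Fin d)) ⇑π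
    rw [Equiv.coe_refl, Matrix.mul_one] at h
    calc Pl * Pr = ((1 : Matrix (Fin d) (Fin d) ℤ_[p])).submatrix ⇑π ⇑π := h
      _ = 1 := Matrix.submatrix_one_equiv π
  have hPlunit : IsUnit Pl.det :=
    IsUnit.of_mul_eq_one Pr.det (by rw [← Matrix.det_mul, hPlPr, Matrix.det_one])
  have hPrunit : IsUnit Pr.det :=
    IsUnit.of_mul_eq_one Pl.det (by rw [mul_comm, ← Matrix.det_mul, hPlPr, Matrix.det_one])
  have hdiagsub : (Matrix.diagonal g').submatrix ⇑τ.symm ⇑τ.symm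
      = Matrix.diagonal (fun i : Fin d =>
          if (i : ℕ) < d - 2 then (1 : ℤ_[p]) else (p : ℤ_[p]) ^ e) := by
    ext i j
    by_cases hij : i = j
    · subst hij
      rw [Matrix.submatrix_apply, Matrix.diagonal_apply_eq, Matrix.diagonal_apply_eq]
      rcases hsp : τ.symm i with a | a
      · have hi : i = τ (Sum.inl a) := by rw [← hsp, Equiv.apply_symm_apply]
        have hiv : (i : ℕ) = (a : ℕ) := by
          rw [hi, hτ]
          simp
        rw [hg']
        simp only [Sum.elim_inl]
        rw [if_pos]
        rw [hiv]
        exact a.isLt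
      · have hi : i = τ (Sum.inr a) := by rw [← hsp, Equiv.apply_symm_apply]
        have hiv : (i : ℕ) = d - 2 + (a : ℕ) := by
          rw [hi, hτ]
          simp
        rw [hg']
        simp only [Sum.elim_inr]
        rw [if_neg]
        omega
    · rw [Matrix.submatrix_apply,
        Matrix.diagonal_apply_ne _ (fun hc => hij (τ.symm.injective hc)),
        Matrix.diagonal_apply_ne _ hij]
  set Us : Matrix (Fin d) (Fin d) ℤ_[p] := U1.submatrix ⇑τ.symm ⇑τ.symm with hUs
  set Vs : Matrix (Fin d) (Fin d) ℤ_[p] := V2.submatrix ⇑τ.symm ⇑τ.symm with hVs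
  have h1 : Pl * M * Pr = M.submatrix ⇑π ⇑π := by rw [hPlM, hMPr]
  refine ⟨e, hval, Us * Pl, Pr * Vs, ?_, ?_, ?_⟩
  · rw [Matrix.det_mul, hUs, Matrix.det_submatrix_equiv_self]
    exact IsUnit.mul ⟨uU, huU⟩ hPlunit
  · rw [Matrix.det_mul, hVs, Matrix.det_submatrix_equiv_self]
    exact hPrunit.mul hdetV2
  · calc (Us * Pl) * M * (Pr * Vs)
        = Us * ((Pl * M * Pr) * Vs) := by simp only [Matrix.mul_assoc]
      _ = Us * (M.submatrix ⇑π ⇑π * Vs) := by rw [h1]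
      _ = Us * (N.submatrix ⇑τ.symm ⇑τ.symm * Vs) := by rw [← hMππ]
      _ = (U1.submatrix ⇑τ.symm ⇑τ.symm * N.submatrix ⇑τ.symm ⇑τ.symm) * Vs := by
            rw [hUs, Matrix.mul_assoc]
      _ = ((U1 * N).submatrix ⇑τ.symm ⇑τ.symm) * Vs :=  by
            rw [Matrix.submatrix_mul_equiv U1 N ⇑τ.symm τ.symm ⇑τ.symm]
      _ = ((U1 * N).submatrix ⇑τ.symm ⇑τ.symm) * V2.submatrix ⇑τ.symm ⇑τ.symm := by
            rw [hVs]
      _ = (U1 * N * V2).submatrix ⇑τ.symm ⇑τ.symm := by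
            rw [Matrix.submatrix_mul_equiv (U1 * N) V2 ⇑τ.symm τ.symm ⇑τ.symm]
      _ = (Matrix.diagonal g').submatrix ⇑τ.symm ⇑τ.symm := by rw [hfinal]
      _ = Matrix.diagonal (fun i : Fin d =>
            if (i : ℕ) < d - 2 then (1 : ℤ_[p]) else (p : ℤ_[p]) ^ e) := hdiagsub
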